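/- arXiv:1003.3189 — 5 statements merged into one kernel-verified Lean document; each statement's English description precedes it below -/
import Mathlib

section
/- For every ordinal α < ℵ_{ω+1} and every family (a_β)_{β<α} of countably infinite subsets of ℵ_ω, there exists a countably infinite set a ⊆ ℵ_ω such that a \ a_β is infinite for every β < α. -/
open Cardinal Ordinal Set


/-- `a` is a countably infinite subset of `ℵ_ω`, viewed as the set of
ordinals below the initial ordinal of `ℵ_ω`. -/
def MemAlephOmegaOmega (a : Set Ordinal.{0}) : Prop :=
  a ⊆ Set.Iio (Cardinal.aleph Ordinal.omega0).ord ∧ a.Countable ∧ a.Infinite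

/-- For every ordinal `α < ℵ_{ω+1}` and every family `(a_β)_{β<α}` of countably infinite
subsets of `ℵ_ω`, there is a countably infinite `a ⊆ ℵ_ω` with `a \ a_β` infinite for all
`β < α`. -/
theorem stmt0 (α : Ordinal.{0}) (hα : α < (Cardinal.aleph (Ordinal.omega0 + 1)).ord)
    (a : ∀ β : Ordinal, β < α → Set Ordinal)
    (ha : ∀ (β : Ordinal) (hβ : β < α), MemAlephOmegaOmega (a β hβ)) :
    ∃ c : Set Ordinal, MemAlephOmegaOmega c ∧
      ∀ (β : Ordinal) (hβ : β < α), (c \ a β hβ).Infinite := by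
  have hcard : α.card ≤ aleph omega0 := by
    rw [Cardinal.lt_ord, add_one_eq_succ, aleph_succ, Order.lt_succ_iff] at hα
    exact hα
  have hmk : #(Set.Iio α) ≤ #(Set.Iio (aleph omega0).ord) := by
    rw [Cardinal.mk_Iio_ordinal, Cardinal.mk_Iio_ordinal, card_ord]
    exact Cardinal.lift_le.mpr hcard
  obtain ⟨f⟩ := Cardinal.le_def _ _ |>.mp hmk
  set h : Set.Iio α → Ordinal := fun b => (f b).1 with hh
  have hlt : ∀ b, h b < (aleph omega0).ord := fun b => (f b).2
  have hinj : Function.Injective h := fun b b' e => f.injective (Subtype.ext e)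
  let bad : ℕ → Set Ordinal := fun n =>
    ⋃ b : {b : Set.Iio α // h b < (aleph n).ord}, a b.1.1 b.1.2
  have hbad : ∀ n : ℕ, #(bad n) ≤ Cardinal.lift.{1,0} (aleph n) := by
    intro n
    refine (mk_iUnion_le _).trans ?_
    have h1 : #{b : Set.Iio α // h b < (aleph n).ord} ≤ Cardinal.lift.{1,0} (aleph n) := by
      have h0 : #{b : Set.Iio α // h b < (aleph n).ord} ≤ #(Set.Iio ((aleph n).ord)) := by
        refine ⟨⟨fun b => ⟨h b.1, b.2⟩, ?_⟩⟩
        intro b b' e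
        exact Subtype.ext (hinj (by simpa using congrArg Subtype.val e))
      rwa [Cardinal.mk_Iio_ordinal, card_ord] at h0
    have h2 : (⨆ b : {b : Set.Iio α // h b < (aleph n).ord}, #(a b.1.1 b.1.2)) ≤ ℵ₀ := by
      rcases isEmpty_or_nonempty {b : Set.Iio α // h b < (aleph n).ord} with hE | hN
      · simp [ciSup_of_empty]
      · exact ciSup_le fun b => mk_le_aleph0_iff.mpr (Set.countable_coe_iff.mpr ((ha _ _).2.1))
    have h3 : #{b : Set.Iio α // h b < (aleph n).ord} * (⨆ b : {b : Set.Iio α // h b < (aleph n).ord}, #(a b.1.1 b.1.2)) ≤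
        Cardinal.lift.{1,0} (aleph n) * Cardinal.lift.{1,0} ℵ₀ := by
      refine mul_le_mul' h1 (h2.trans ?_)
      rw [Cardinal.lift_aleph0]
    refine h3.trans ?_
    rw [← Cardinal.lift_mul, Cardinal.lift_le]
    calc aleph (n : Ordinal) * ℵ₀ ≤ aleph n * aleph n :=
          mul_le_mul' le_rfl (aleph0_le_aleph _)
      _ = aleph n := mul_eq_self (aleph0_le_aleph _)
  have hne : ∀ n : ℕ, (Set.Iio ((aleph (n + 1 : ℕ)).ord) \
      (bad n ∪ Set.Iio ((aleph n).ord))).Nonempty := by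
    intro n
    rw [Set.nonempty_iff_ne_empty]
    intro hE
    have hsub : Set.Iio ((aleph (n + 1 : ℕ)).ord) ⊆ bad n ∪ Set.Iio ((aleph n).ord) := by
      rwa [Set.diff_eq_empty] at hE
    have hle := (Cardinal.mk_le_mk_of_subset hsub).trans (mk_union_le _ _)
    rw [Cardinal.mk_Iio_ordinal, Cardinal.mk_Iio_ordinal, card_ord, card_ord] at hle
    have hle2 : Cardinal.lift.{1,0} (aleph ((n : ℕ) + 1 : ℕ)) ≤ Cardinal.lift.{1,0} (aleph n) := by
      refine hle.trans ?_
      calc #(bad n) + Cardinal.lift.{1,0} (aleph n)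
          ≤ Cardinal.lift.{1,0} (aleph n) + Cardinal.lift.{1,0} (aleph n) :=
            add_le_add_left (hbad n) _
        _ = Cardinal.lift.{1,0} (aleph n + aleph n) := (Cardinal.lift_add _ _).symm
        _ = Cardinal.lift.{1,0} (aleph n) := by rw [add_eq_self (aleph0_le_aleph _)]
    rw [Cardinal.lift_le, aleph_le_aleph] at hle2
    exact absurd hle2 (by exact_mod_cast Nat.not_succ_le_self n)
  choose x hx using hne
  have hx1 : ∀ n, x n < (aleph (n + 1 : ℕ)).ord := fun n => (hx n).1
  have hx2 : ∀ n, x n ∉ bad n := fun n h' => (hx n).2 (Or.inl h')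
  have hx3 : ∀ n, (aleph (n : ℕ)).ord ≤ x n := fun n =>
    not_lt.mp fun h' => (hx n).2 (Or.inr h')
  have hmono : StrictMono x := by
    intro m n hmn
    calc x m < (aleph (m + 1 : ℕ)).ord := hx1 m
      _ ≤ (aleph (n : ℕ)).ord := by
          apply ord_le_ord.mpr
          rw [aleph_le_aleph]
          exact_mod_cast hmn
      _ ≤ x n := hx3 n
  refine ⟨Set.range x, ⟨?_, countable_range x, Set.infinite_range_of_injective hmono.injective⟩,
    ?_⟩
  · rintro _ ⟨n, rfl⟩
    have hω : aleph ((n : ℕ) + 1 : ℕ) ≤ aleph omega0 := by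
      rw [aleph_le_aleph]
      exact (nat_lt_omega0 (n + 1)).le
    exact lt_of_lt_of_le (hx1 n) (ord_le_ord.mpr hω)
  · intro β hβ
    obtain ⟨m, hm⟩ : ∃ m : ℕ, h ⟨β, hβ⟩ < (aleph (m : ℕ)).ord := by
      by_contra hc
      push_neg at hc
      have hge : aleph omega0 ≤ (h ⟨β, hβ⟩).card := by
        rw [aleph_limit isSuccLimit_omega0]
        refine ciSup_le' fun o => ?_
        obtain ⟨k, hk⟩ := lt_omega0.mp o.2
        have : (aleph (k : ℕ)).ord ≤ h ⟨β, hβ⟩ := hc k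
        rw [Cardinal.ord_le] at this
        simpa [hk] using this
      exact absurd (Cardinal.lt_ord.mp (hlt ⟨β, hβ⟩)) (not_lt.mpr hge)
    have hsub : x '' Set.Ici m ⊆ Set.range x \ a β hβ := by
      rintro _ ⟨k, hk, rfl⟩
      refine ⟨Set.mem_range_self k, fun hmem => hx2 k ?_⟩
      have hβk : h ⟨β, hβ⟩ < (aleph (k : ℕ)).ord := by
        refine lt_of_lt_of_le hm (ord_le_ord.mpr ?_)
        rw [aleph_le_aleph]
        exact_mod_cast hk
      exact Set.mem_iUnion.mpr ⟨⟨⟨β, hβ⟩, hβk⟩, hmem⟩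
    exact ((Set.Ici_infinite m).image (hmono.injective.injOn)).mono hsub
end

section
/- Assume (ℵ_ω)^ω = ℵ_{ω+1} and Chang's conjecture (ℵ_{ω+1}, ℵ_ω) ↠ (ℵ_1, ℵ_0). If 𝒟 is cofinal in ([ℵ_ω]^ω, ⊆), then there exists A ∈ [ℵ_ω]^ω such that |𝒟 ∩ 𝒫(A)| > ℵ_0, i.e., uncountably many members of 𝒟 are subsets of A. -/
/-- Chang's conjecture `(ℵ_{ω+1}, ℵ_ω) ↠ (ℵ_1, ℵ_0)`: every structure in a countable
language on a set of size `ℵ_{ω+1}` with a distinguished subset of size `ℵ_ω` has an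
elementary substructure of size `ℵ_1` meeting the distinguished set in a set of size `ℵ_0`. -/
def ChangsConjecture : Prop :=
  ∀ (L : FirstOrder.Language.{0, 0}) (M : Type) [inst : L.Structure M],
    L.card ≤ Cardinal.aleph0 →
    Cardinal.mk M = Cardinal.aleph (Ordinal.omega0 + 1) →
    ∀ U : Set M, Cardinal.mk U = Cardinal.aleph Ordinal.omega0 →
      ∃ S : L.ElementarySubstructure M,
        Cardinal.mk S = Cardinal.aleph 1 ∧
        Cardinal.mk (((S : FirstOrder.Language.Substructure L M) : Set M) ∩ U : Set M) =
          Cardinal.aleph0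

open Cardinal Ordinal Set

lemma aux_exists_nat {β : Ordinal.{0}} (h : β < (Cardinal.aleph Ordinal.omega0).ord) :
    ∃ n : ℕ, β < (Cardinal.aleph n).ord := by
  have hc : β.card < Cardinal.aleph Ordinal.omega0 := (Cardinal.lt_ord).mp h
  by_contra hn
  push_neg at hn
  have h2 : ∀ n : ℕ, Cardinal.aleph n ≤ β.card := fun n => (Cardinal.ord_le).mp (hn n)
  have h3 : Cardinal.aleph Ordinal.omega0 ≤ β.card := by
    rw [Cardinal.aleph_limit Ordinal.isSuccLimit_omega0]
    have : Nonempty (Set.Iio Ordinal.omega0) := ⟨⟨0, Ordinal.omega0_pos⟩⟩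
    refine ciSup_le fun a => ?_
    obtain ⟨n, hn'⟩ := (Ordinal.lt_omega0).mp a.2
    calc Cardinal.aleph a.1 = Cardinal.aleph n := by rw [hn']
    _ ≤ β.card := h2 n
  exact absurd hc (not_lt.mpr h3)

lemma aux_not_small (D : Set (Set Ordinal.{0})) (hD : ∀ d ∈ D, MemAlephOmegaOmega d)
    (hsmall : Cardinal.mk D ≤ Cardinal.lift.{1,0} (Cardinal.aleph Ordinal.omega0)) :
    ∃ a, MemAlephOmegaOmega a ∧ ∀ d ∈ D, ¬ a ⊆ d := by
  set κ : Ordinal.{0} := (Cardinal.aleph Ordinal.omega0).ord with hκ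
  -- get an embedding of D into κ.ToType
  have hmk : Cardinal.mk κ.ToType = Cardinal.aleph Ordinal.omega0 := by
    rw [Cardinal.mk_toType, Cardinal.card_ord]
  have hle : Cardinal.lift.{0} (Cardinal.mk ↥D) ≤ Cardinal.lift.{1} (Cardinal.mk κ.ToType) := by
    rw [hmk, Cardinal.lift_id']
    exact hsmall
  obtain ⟨f⟩ := Cardinal.lift_mk_le'.mp hle
  set rk : ↥D → Ordinal.{0} := fun d => ((Ordinal.ToType.mk (o := κ)).symm (f d)).1 with hrk
  have hrklt : ∀ d, rk d < κ := fun d => ((Ordinal.ToType.mk (o := κ)).symm (f d)).2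
  have hrkinj : Function.Injective rk := by
    intro d1 d2 h
    exact f.injective ((Ordinal.ToType.mk (o := κ)).symm.injective (Subtype.ext h))
  set T : ℕ → Set Ordinal.{0} :=
    fun n => ⋃ p : {d : ↥D // rk d < (Cardinal.aleph n).ord}, ((p.1 : Set Ordinal)) with hT
  have hTcard : ∀ n : ℕ, Cardinal.mk (T n) ≤ Cardinal.lift.{1,0} (Cardinal.aleph n) := by
    intro n
    rcases isEmpty_or_nonempty {d : ↥D // rk d < (Cardinal.aleph n).ord} with hE | hNE
    · have hTe : T n = ∅ := Set.iUnion_of_empty _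
      rw [hTe]
      simp
    · have h2 : (⨆ p : {d : ↥D // rk d < (Cardinal.aleph n).ord},
          Cardinal.mk ((p.1 : Set Ordinal) : Set Ordinal)) ≤ Cardinal.aleph0 := by
        refine ciSup_le' fun p => ?_
        haveI := ((hD _ p.1.2).2.1).to_subtype
        exact Cardinal.mk_le_aleph0
      have h3 : Cardinal.mk {d : ↥D // rk d < (Cardinal.aleph n).ord} ≤
          Cardinal.lift.{1,0} (Cardinal.aleph n) := by
        have emb : {d : ↥D // rk d < (Cardinal.aleph n).ord} ↪
            ↥(Set.Iio ((Cardinal.aleph n).ord : Ordinal.{0})) :=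
          ⟨fun p => ⟨rk p.1, p.2⟩, by
            intro a b h
            exact Subtype.ext (hrkinj (Subtype.mk_eq_mk.mp h))⟩
        calc Cardinal.mk {d : ↥D // rk d < (Cardinal.aleph n).ord}
            ≤ Cardinal.mk ↥(Set.Iio ((Cardinal.aleph n).ord : Ordinal.{0})) :=
              Cardinal.mk_le_of_injective emb.injective
          _ = Cardinal.lift.{1,0} ((Cardinal.aleph n).ord.card) := Ordinal.mk_Iio_ordinal _
          _ = Cardinal.lift.{1,0} (Cardinal.aleph n) := by rw [Cardinal.card_ord]
      calc Cardinal.mk (T n) ≤ _ * _ := Cardinal.mk_iUnion_le _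
        _ ≤ Cardinal.lift.{1,0} (Cardinal.aleph n) * Cardinal.aleph0 := mul_le_mul' h3 h2
        _ ≤ Cardinal.lift.{1,0} (Cardinal.aleph n) * Cardinal.lift.{1,0} (Cardinal.aleph n) :=
            mul_le_mul' le_rfl (by
              rw [← Cardinal.lift_aleph0.{1,0}]
              exact Cardinal.lift_le.mpr (Cardinal.aleph0_le_aleph n))
        _ = Cardinal.lift.{1,0} (Cardinal.aleph n) :=
            Cardinal.mul_eq_self (Cardinal.aleph0_le_lift.mpr (Cardinal.aleph0_le_aleph n))
  have hBne : ∀ n : ℕ, (Set.Iio κ \ (T n ∪ Set.Iio ((Cardinal.aleph n).ord))).Nonempty := by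
    intro n
    by_contra hne
    rw [Set.not_nonempty_iff_eq_empty, Set.diff_eq_empty] at hne
    have hcard : Cardinal.mk (Set.Iio κ) ≤
        Cardinal.mk ↥(T n ∪ Set.Iio ((Cardinal.aleph n).ord)) :=
      Cardinal.mk_le_mk_of_subset hne
    have h2 : Cardinal.mk ↥(T n ∪ Set.Iio ((Cardinal.aleph n).ord)) ≤
        Cardinal.lift.{1,0} (Cardinal.aleph n) := by
      refine (Cardinal.mk_union_le _ _).trans ?_
      have hIio : Cardinal.mk ↥(Set.Iio ((Cardinal.aleph n).ord : Ordinal.{0})) =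
          Cardinal.lift.{1,0} (Cardinal.aleph n) := by
        rw [Ordinal.mk_Iio_ordinal, Cardinal.card_ord]
      rw [hIio]
      calc Cardinal.mk (T n) + Cardinal.lift.{1,0} (Cardinal.aleph n)
          ≤ Cardinal.lift.{1,0} (Cardinal.aleph n) + Cardinal.lift.{1,0} (Cardinal.aleph n) :=
            add_le_add_left (hTcard n) _
        _ = Cardinal.lift.{1,0} (Cardinal.aleph n) :=
            Cardinal.add_eq_self (Cardinal.aleph0_le_lift.mpr (Cardinal.aleph0_le_aleph n))
    have h3 : Cardinal.mk (Set.Iio κ) = Cardinal.lift.{1,0} (Cardinal.aleph Ordinal.omega0) := by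
      rw [Ordinal.mk_Iio_ordinal, hκ, Cardinal.card_ord]
    rw [h3] at hcard
    have h4 := hcard.trans h2
    have h5 : Cardinal.lift.{1,0} (Cardinal.aleph n) <
        Cardinal.lift.{1,0} (Cardinal.aleph Ordinal.omega0) :=
      Cardinal.lift_lt.mpr (Cardinal.aleph_lt_aleph.mpr (Ordinal.nat_lt_omega0 n))
    exact absurd h4 (not_le.mpr h5)
  set x : ℕ → Ordinal.{0} := fun n => (hBne n).choose with hxdef
  have hx : ∀ n : ℕ, x n ∈ Set.Iio κ \ (T n ∪ Set.Iio ((Cardinal.aleph n).ord)) :=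
    fun n => (hBne n).choose_spec
  have hxκ : ∀ n, x n < κ := fun n => (hx n).1
  have hxT : ∀ n, x n ∉ T n := fun n h => (hx n).2 (Or.inl h)
  have hxge : ∀ n : ℕ, ((Cardinal.aleph n).ord : Ordinal.{0}) ≤ x n :=
    fun n => not_lt.mp (fun h => (hx n).2 (Or.inr h))
  refine ⟨Set.range x, ⟨?_, Set.countable_range x, ?_⟩, ?_⟩
  · rintro β ⟨n, rfl⟩
    exact hxκ n
  · intro hfin
    obtain ⟨m, hm, hmax⟩ := hfin.exists_maximal ⟨x 0, ⟨0, rfl⟩⟩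
    obtain ⟨k, hk⟩ := hm
    have hmκ : m < κ := hk ▸ hxκ k
    obtain ⟨n, hn⟩ := aux_exists_nat (hκ ▸ hmκ)
    have hlt : m < x n := lt_of_lt_of_le hn (hxge n)
    exact absurd (hmax ⟨n, rfl⟩ hlt.le) (not_le.mpr hlt)
  · rintro d hd hsub
    obtain ⟨n, hn⟩ := aux_exists_nat (hκ ▸ hrklt ⟨d, hd⟩)
    exact hxT n (Set.mem_iUnion.mpr ⟨⟨⟨d, hd⟩, hn⟩, hsub ⟨n, rfl⟩⟩)

def L5' : FirstOrder.Language.{0,0} :=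
  ⟨fun n => match n with | 1 => ℕ | _ => Empty, fun _ => Empty⟩

noncomputable def L5struc' (M : Type) (F : ℕ → M → M) : L5'.Structure M where
  funMap {n} f v :=
    match n, f, v with
    | 1, k, v => F k (v 0)
  RelMap {n} r _ := r.elim

lemma L5card' : L5'.card ≤ Cardinal.aleph0 := by
  have h1 : ∀ n, Countable (L5'.Functions n) := by
    intro n
    match n with
    | 0 => exact inferInstanceAs (Countable Empty)
    | 1 => exact inferInstanceAs (Countable ℕ)
    | (n+2) => exact inferInstanceAs (Countable Empty)
  have h2 : ∀ n, Countable (L5'.Relations n) := fun _ => inferInstanceAs (Countable Empty)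
  haveI : Countable (Σ l, L5'.Functions l) := by
    haveI := h1
    infer_instance
  haveI : Countable (Σ l, L5'.Relations l) := by
    haveI := h2
    infer_instance
  haveI : Countable L5'.Symbols := by
    unfold FirstOrder.Language.Symbols
    infer_instance
  exact Cardinal.mk_le_aleph0

lemma L5funMap' (M : Type) (F : ℕ → M → M) (k : ℕ) (x : M) :
    (L5struc' M F).funMap (n := 1) k ![x] = F k x := rfl


/-- If `(ℵ_ω)^ω = ℵ_{ω+1}` and Chang's conjecture `(ℵ_{ω+1}, ℵ_ω) ↠ (ℵ_1, ℵ_0)` holds,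
then for every cofinal `𝒟 ⊆ [ℵ_ω]^ω` there is `A ∈ [ℵ_ω]^ω` such that uncountably many
members of `𝒟` are subsets of `A`. -/
theorem stmt5
    (hpow : Cardinal.aleph Ordinal.omega0 ^ Cardinal.aleph0 =
      Cardinal.aleph (Ordinal.omega0 + 1))
    (hcc : ChangsConjecture)
    (D : Set (Set Ordinal.{0})) (hD : ∀ d ∈ D, MemAlephOmegaOmega d)
    (hcof : ∀ a, MemAlephOmegaOmega a → ∃ d ∈ D, a ⊆ d) :
    ∃ A, MemAlephOmegaOmega A ∧ ¬ {d ∈ D | d ⊆ A}.Countable := by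
  classical
  have hpow0 : (Cardinal.aleph Ordinal.omega0 : Cardinal.{0}) ^ (Cardinal.aleph0 : Cardinal.{0}) =
      Cardinal.aleph (Ordinal.omega0 + 1) := by
    apply Cardinal.lift_injective
    rw [Cardinal.lift_power, Cardinal.lift_aleph, Cardinal.lift_aleph, Cardinal.lift_aleph0,
      Ordinal.lift_omega0, Ordinal.lift_add, Ordinal.lift_omega0, Ordinal.lift_one]
    exact hpow
  clear hpow
  set κ : Ordinal.{0} := (Cardinal.aleph Ordinal.omega0).ord with hκ
  set κ' : Ordinal.{0} := (Cardinal.aleph (Ordinal.omega0 + 1)).ord with hκ'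
  set M : Type := κ'.ToType with hMdef
  have hM : Cardinal.mk M = Cardinal.aleph (Ordinal.omega0 + 1) := by
    rw [hMdef, Cardinal.mk_toType, hκ', Cardinal.card_ord]
  have hκκ' : κ < κ' := by
    rw [hκ, hκ']
    apply Cardinal.ord_lt_ord.mpr
    apply Cardinal.aleph_lt_aleph.mpr
    rw [Ordinal.add_one_eq_succ]
    exact Order.lt_succ _
  -- the embedding u of κ.ToType into M with image U
  set u : κ.ToType → M := fun y =>
    Ordinal.ToType.mk (o := κ') ⟨((Ordinal.ToType.mk (o := κ)).symm y).1,
      Set.mem_Iio.mpr (lt_trans (Set.mem_Iio.mp ((Ordinal.ToType.mk (o := κ)).symm y).2) hκκ')⟩ with hu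
  have huinj : Function.Injective u := by
    intro y1 y2 h
    rw [hu] at h
    have h2 := (Ordinal.ToType.mk (o := κ')).injective h
    have h3 : (((Ordinal.ToType.mk (o := κ)).symm y1) : Ordinal) =
        (((Ordinal.ToType.mk (o := κ)).symm y2) : Ordinal) := Subtype.mk_eq_mk.mp h2
    exact (Ordinal.ToType.mk (o := κ)).symm.injective (Subtype.ext h3)
  set U : Set M := Set.range u with hUdef
  have hU : Cardinal.mk U = Cardinal.aleph Ordinal.omega0 := by
    rw [hUdef, Cardinal.mk_range_eq u huinj, Cardinal.mk_toType, hκ, Cardinal.card_ord]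
  -- enumerations of elements of D
  have hgex : ∀ d : ↥D, ∃ f : ℕ → ↥(d : Set Ordinal), Function.Surjective f := by
    intro d
    exact ((hD d d.2).2.1).exists_surjective ((hD d d.2).2.2).nonempty
  set g : ↥D → ℕ → Ordinal.{0} := fun d n => ((hgex d).choose n).1 with hg
  have hgmem : ∀ (d : ↥D) (n : ℕ), g d n ∈ (d : Set Ordinal) := fun d n => ((hgex d).choose n).2
  have hgsurj : ∀ (d : ↥D), ∀ β ∈ (d : Set Ordinal), ∃ n, g d n = β := by
    intro d β hβ
    obtain ⟨n, hn⟩ := (hgex d).choose_spec ⟨β, hβ⟩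
    exact ⟨n, congrArg Subtype.val hn⟩
  have hgκ : ∀ (d : ↥D) (n : ℕ), g d n < κ := by
    intro d n
    exact (hD d d.2).1 (hgmem d n)
  -- cardinality of D
  have hrange : ∀ d : ↥D, Set.range (g d) = (d : Set Ordinal) := by
    intro d
    ext β
    constructor
    · rintro ⟨n, rfl⟩
      exact hgmem d n
    · intro hβ
      obtain ⟨n, hn⟩ := hgsurj d β hβ
      exact ⟨n, hn⟩
  have hDcard : Cardinal.mk D = Cardinal.lift.{1,0} (Cardinal.aleph (Ordinal.omega0 + 1)) := by
    have hupper : Cardinal.mk D ≤ Cardinal.lift.{1,0} (Cardinal.aleph (Ordinal.omega0 + 1)) := by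
      have hinj : Function.Injective
          (fun (d : ↥D) (n : ℕ) => (⟨g d n, hgκ d n⟩ : ↥(Set.Iio κ))) := by
        intro d1 d2 h
        have h2 : g d1 = g d2 := by
          funext n
          exact Subtype.mk_eq_mk.mp (congrFun h n)
        have h3 : (d1 : Set Ordinal) = (d2 : Set Ordinal) := by
          rw [← hrange d1, ← hrange d2, h2]
        exact Subtype.ext h3
      have h1 : Cardinal.mk D ≤ Cardinal.mk (ℕ → ↥(Set.Iio κ)) :=
        Cardinal.mk_le_of_injective hinj
      have h2 : Cardinal.mk (ℕ → ↥(Set.Iio κ)) =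
          Cardinal.lift.{1,0} (Cardinal.aleph Ordinal.omega0 ^ Cardinal.aleph0) := by
        rw [Cardinal.mk_arrow]
        rw [Ordinal.mk_Iio_ordinal, hκ, Cardinal.card_ord]
        rw [Cardinal.mk_nat, Cardinal.lift_aleph0]
        rw [Cardinal.lift_lift, Cardinal.lift_power, Cardinal.lift_aleph0]
      rw [h2, hpow0] at h1
      exact h1
    refine le_antisymm hupper ?_
    by_contra h
    push_neg at h
    have h2 : Cardinal.mk D ≤ Cardinal.lift.{1,0} (Cardinal.aleph Ordinal.omega0) := by
      have hsucc : Cardinal.aleph (Ordinal.omega0 + 1) = Order.succ (Cardinal.aleph Ordinal.omega0) := by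
        rw [Ordinal.add_one_eq_succ, Cardinal.aleph_succ]
      rw [hsucc, Cardinal.lift_succ] at h
      exact Order.lt_succ_iff.mp h
    obtain ⟨a, ha, hna⟩ := aux_not_small D hD h2
    obtain ⟨d, hd, hsubd⟩ := hcof a ha
    exact hna d hd hsubd
  -- the bijection e : M ≃ D
  have he : Nonempty (M ≃ ↥D) := by
    apply Cardinal.lift_mk_eq'.mp
    rw [hM, hDcard, Cardinal.lift_lift]
  obtain ⟨e⟩ := he
  -- the functions
  set F : ℕ → M → M := fun k x => u (Ordinal.ToType.mk (o := κ) ⟨g (e x) k, hgκ (e x) k⟩) with hF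
  letI : L5'.Structure M := L5struc' M F
  obtain ⟨S, hS1, hS2⟩ := hcc L5' M L5card' hM U hU
  set Ss : Set M := ((S : FirstOrder.Language.Substructure L5' M) : Set M) with hSs
  have hclosed : ∀ (k : ℕ), ∀ x ∈ Ss, F k x ∈ Ss := by
    intro k x hx
    have h1 := (S : FirstOrder.Language.Substructure L5' M).fun_mem (n := 1) (k : L5'.Functions 1) ![x]
      (fun i => by simp; exact hx)
    rw [L5funMap' M F k x] at h1
    exact h1
  -- the set A
  set A : Set Ordinal.{0} :=
    {β | ∃ h : β ∈ Set.Iio κ, u (Ordinal.ToType.mk (o := κ) ⟨β, h⟩) ∈ Ss} with hA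
  have hAsub : A ⊆ Set.Iio κ := fun β hβ => hβ.1
  -- A is equinumerous with Ss ∩ U
  have hAeq : Nonempty (↥A ≃ ↥(Ss ∩ U)) := by
    refine ⟨Equiv.ofBijective
      (fun β => ⟨u (Ordinal.ToType.mk (o := κ) ⟨β.1, β.2.1⟩), β.2.2, Set.mem_range_self _⟩)
      ⟨?_, ?_⟩⟩
    · intro β1 β2 h
      have h2 := huinj (Subtype.mk_eq_mk.mp h)
      have h3 := (Ordinal.ToType.mk (o := κ)).injective h2
      exact Subtype.ext (Subtype.mk_eq_mk.mp h3)
    · rintro ⟨m, hmS, y, rfl⟩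
      refine ⟨⟨((Ordinal.ToType.mk (o := κ)).symm y).1, ((Ordinal.ToType.mk (o := κ)).symm y).2, ?_⟩, ?_⟩
      · simpa using hmS
      · simp
  have hAcard : Cardinal.mk A = Cardinal.aleph0 := by
    obtain ⟨eq⟩ := hAeq
    have h1 : Cardinal.lift.{0,1} (Cardinal.mk A) = Cardinal.lift.{1,0} (Cardinal.mk (Ss ∩ U : Set M)) :=
      Cardinal.lift_mk_eq'.mpr ⟨eq⟩
    rw [hS2] at h1
    rw [Cardinal.lift_id'] at h1  -- ??
    rw [h1, Cardinal.lift_aleph0]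
  have hAcountable : A.Countable := by
    rw [← Set.countable_coe_iff]
    exact Cardinal.mk_le_aleph0_iff.mp hAcard.le
  have hAinf : A.Infinite := by
    rw [← Set.infinite_coe_iff]
    exact Cardinal.aleph0_le_mk_iff.mp hAcard.ge
  -- every e s for s ∈ Ss is a subset of A
  have hsub : ∀ s : M, s ∈ Ss → ((e s : Set Ordinal)) ⊆ A := by
    intro s hs β hβ
    obtain ⟨k, hk⟩ := hgsurj (e s) β hβ
    have hβκ : β ∈ Set.Iio κ := (hD _ (e s).2).1 hβ
    refine ⟨hβκ, ?_⟩
    have h1 := hclosed k s hs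
    rw [hF] at h1
    convert h1 using 3
    exact Subtype.ext hk.symm
  refine ⟨A, ⟨hAsub, hAcountable, hAinf⟩, ?_⟩
  intro hcount
  -- injection from Ss into {d ∈ D | d ⊆ A}
  have hj : Function.Injective (fun s : ↥Ss => (⟨(e s.1 : Set Ordinal),
      (e s.1).2, hsub s.1 s.2⟩ : ↥{d ∈ D | d ⊆ A})) := by
    intro s1 s2 h
    have h2 : (e s1.1 : Set Ordinal) = (e s2.1 : Set Ordinal) := Subtype.mk_eq_mk.mp h
    exact Subtype.ext (e.injective (Subtype.ext h2))
  have hle : Cardinal.lift.{1,0} (Cardinal.mk Ss) ≤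
      Cardinal.lift.{0,1} (Cardinal.mk ↥{d ∈ D | d ⊆ A}) :=
    Cardinal.lift_mk_le'.mpr ⟨⟨_, hj⟩⟩
  have hSscard : Cardinal.mk Ss = Cardinal.aleph 1 := by
    rw [← hS1]
    exact Cardinal.mk_congr (Equiv.setCongr rfl)  -- probably needs fixing
  have hsmall : Cardinal.mk ↥{d ∈ D | d ⊆ A} ≤ Cardinal.aleph0 := by
    haveI := hcount.to_subtype
    exact Cardinal.mk_le_aleph0
  rw [hSscard, Cardinal.lift_id'] at hle
  have hfin : Cardinal.lift.{1,0} (Cardinal.aleph 1) ≤ Cardinal.aleph0 := hle.trans hsmall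
  rw [← Cardinal.lift_aleph0.{1,0}] at hfin
  have := Cardinal.lift_le.mp hfin
  exact absurd this (not_le.mpr Cardinal.aleph0_lt_aleph_one)
end

section
/- Let 𝒜' = (A', U', ≤', ...) be an elementary substructure of a structure on ℵ_{ω+1} (with its natural order ≤ and a fixed function g : ℵ_{ω+1} × ℵ_{ω+1} → ℵ_ω such that g(α,·)↾α is injective for each α) with |A'| = ℵ_1 and |U'| = ℵ_0, where U' = A' ∩ ℵ_ω. Then the order type of (A', ≤) is exactly ω_1; in particular every proper initial segment of A' is countable. -/
/-- Let `A' ⊆ ℵ_{ω+1}` be the universe of an elementary substructure of the structure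
`(ℵ_{ω+1}, ℵ_ω, ≤, g)`, where `g(α,·)↾α` injects `α` into `ℵ_ω` for each `α < ℵ_{ω+1}`;
elementarity is expressed by closure of `A'` under `g`, and `U' = A' ∩ ℵ_ω`.
If `|A'| = ℵ_1` and `|U'| = ℵ_0`, then the order type of `A'` is exactly `ω_1`;
in particular every proper initial segment of `A'` is countable. -/
theorem stmt6 (A' : Set Ordinal.{0})
    (hA'sub : A' ⊆ Set.Iio (Cardinal.aleph (Ordinal.omega0 + 1)).ord)
    (g : Ordinal → Ordinal → Ordinal)
    (hg : ∀ α < (Cardinal.aleph (Ordinal.omega0 + 1)).ord,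
      (∀ β < α, g α β < (Cardinal.aleph Ordinal.omega0).ord) ∧ Set.InjOn (g α) (Set.Iio α))
    (hclosed : ∀ α ∈ A', ∀ β ∈ A', g α β ∈ A')
    (hcard : Cardinal.mk A' = Cardinal.aleph 1)
    (hU : Cardinal.mk (A' ∩ Set.Iio (Cardinal.aleph Ordinal.omega0).ord : Set Ordinal) =
      Cardinal.aleph0) :
    Ordinal.type (Subrel LT.lt (· ∈ A')) = (Cardinal.aleph 1).ord ∧
      ∀ α ∈ A', (A' ∩ Set.Iio α).Countable := by
  have hcount : ∀ α ∈ A', (A' ∩ Set.Iio α).Countable := by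
    intro α hα
    have hαlt := hA'sub hα
    obtain ⟨hg1, hg2⟩ := hg α hαlt
    have hle : Cardinal.mk (A' ∩ Set.Iio α : Set Ordinal) ≤
        Cardinal.mk (A' ∩ Set.Iio (Cardinal.aleph Ordinal.omega0).ord : Set Ordinal) := by
      refine ⟨⟨fun x => ⟨g α x, hclosed α hα x x.2.1, hg1 x x.2.2⟩, ?_⟩⟩
      intro x y hxy
      exact Subtype.ext (hg2 x.2.2 y.2.2 (by simpa using congrArg Subtype.val hxy))
    rw [hU] at hle
    rwa [← Set.countable_coe_iff, ← Cardinal.mk_le_aleph0_iff]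
  refine ⟨?_, hcount⟩
  have hcard' : (Ordinal.type (Subrel LT.lt (· ∈ A'))).card = Cardinal.aleph 1 := by
    rw [Ordinal.card_type]; exact hcard
  apply le_antisymm
  · by_contra h
    push_neg at h
    obtain ⟨x, hx⟩ := Ordinal.typein_surj (Subrel LT.lt (· ∈ A')) h
    have h1 : Cardinal.mk {y // Subrel LT.lt (· ∈ A') y x} = Cardinal.aleph 1 := by
      rw [← Ordinal.card_typein, hx, Cardinal.card_ord]
    have h2 : Cardinal.mk {y // Subrel LT.lt (· ∈ A') y x} ≤
        Cardinal.mk (A' ∩ Set.Iio (x : Ordinal) : Set Ordinal) := by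
      refine ⟨⟨fun y => ⟨y.1, y.1.2, y.2⟩, ?_⟩⟩
      intro a b hab
      exact Subtype.ext (Subtype.ext (by simpa using congrArg Subtype.val hab))
    have h3 : Cardinal.mk (A' ∩ Set.Iio (x : Ordinal) : Set Ordinal) ≤ Cardinal.aleph0 := by
      rw [Cardinal.mk_le_aleph0_iff, Set.countable_coe_iff]
      exact hcount x x.2
    have := (h1 ▸ h2).trans h3
    exact absurd this (by simp [Cardinal.aleph0_lt_aleph_one.not_ge])
  · rw [Cardinal.ord_le, hcard']
end

section
/- Assume (ℵ_ω)^ω = ℵ_{ω+1} and Chang's conjecture (ℵ_{ω+1}, ℵ_ω) ↠ (ℵ_1, ℵ_0). Then for every point x of 2^{ℵ_ω}, there is no local base ℬ at x in the G_δ-modification of 2^{ℵ_ω} such that |{B' ∈ ℬ : B ⊆ B'}| ≤ ℵ_0 for every B ∈ ℬ; consequently χNt(x, (2^{ℵ_ω})_δ) ≥ ω_2. -/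
/-- The `G_δ`-modification of a topological space: the topology generated by
countable intersections of open sets. -/
def deltaTop (X : Type*) [TopologicalSpace X] : TopologicalSpace X :=
  TopologicalSpace.generateFrom {s | ∃ f : ℕ → Set X, (∀ n, IsOpen (f n)) ∧ s = ⋂ n, f n}

/-- `B` is a local base at `x` for the topology `t`. -/
def IsLocalBaseAt {X : Type*} (t : TopologicalSpace X) (x : X) (B : Set (Set X)) : Prop :=
  (∀ b ∈ B, t.IsOpen b ∧ x ∈ b) ∧ ∀ U, t.IsOpen U → x ∈ U → ∃ b ∈ B, b ⊆ U

section Aux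

open Set Cardinal Ordinal TopologicalSpace FirstOrder

variable {ι : Type}

/-- The cylinder around `x` with support `s`. -/
def cyl (x : ι → Bool) (s : Set ι) : Set (ι → Bool) := {y | ∀ i ∈ s, y i = x i}

lemma mem_cyl_self (x : ι → Bool) (s : Set ι) : x ∈ cyl x s := fun _ _ => rfl

lemma cyl_mono (x : ι → Bool) {s t : Set ι} (h : s ⊆ t) : cyl x t ⊆ cyl x s :=
  fun _ hy i hi => hy i (h hi)

lemma subset_of_cyl_subset [DecidableEq ι] (x : ι → Bool) {s t : Set ι}
    (h : cyl x s ⊆ cyl x t) : t ⊆ s := by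
  intro i hi
  by_contra hns
  have hy : Function.update x i (!x i) ∈ cyl x s := by
    intro j hj
    rcases eq_or_ne j i with rfl | hne
    · exact absurd hj hns
    · simp [Function.update_of_ne hne]
  have := h hy i hi
  simp [Function.update_self] at this

lemma exists_finset_cyl {U : Set (ι → Bool)} (hU : IsOpen U) {x : ι → Bool} (hx : x ∈ U) :
    ∃ I : Finset ι, cyl x ↑I ⊆ U := by
  obtain ⟨I, u, hu, hsub⟩ := isOpen_pi_iff.1 hU x hx
  refine ⟨I, fun y hy => hsub ?_⟩
  intro a ha
  rw [hy a ha]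
  exact (hu a ha).2

lemma isOpen_cyl_single (x : ι → Bool) (i : ι) : IsOpen {y : ι → Bool | y i = x i} := by
  have : {y : ι → Bool | y i = x i} = (fun y : ι → Bool => y i) ⁻¹' {x i} := rfl
  rw [this]
  exact (continuous_apply i).isOpen_preimage _ (isOpen_discrete _)

/-- Countably supported cylinders are open in the delta topology. -/
lemma deltaTop_isOpen_cyl (x : ι → Bool) {s : Set ι} (hs : s.Countable) :
    (deltaTop (ι → Bool)).IsOpen (cyl x s) := by
  rcases s.eq_empty_or_nonempty with rfl | hne
  · have : cyl x (∅ : Set ι) = Set.univ := by ext y; simp [cyl, Set.mem_setOf_eq]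
    rw [this]; exact (deltaTop (ι → Bool)).isOpen_univ
  · obtain ⟨f, rfl⟩ := hs.exists_eq_range hne
    apply TopologicalSpace.GenerateOpen.basic
    refine ⟨fun n => {y | y (f n) = x (f n)}, fun n => isOpen_cyl_single x (f n), ?_⟩
    ext y
    simp [cyl]

/-- Every delta-open set containing x contains a countably supported cylinder. -/
lemma deltaTop_exists_cyl {U : Set (ι → Bool)} (hU : (deltaTop (ι → Bool)).IsOpen U)
    {x : ι → Bool} (hx : x ∈ U) : ∃ s : Set ι, s.Countable ∧ cyl x s ⊆ U := by
  have hU' : TopologicalSpace.GenerateOpen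
      {s | ∃ f : ℕ → Set (ι → Bool), (∀ n, IsOpen (f n)) ∧ s = ⋂ n, f n} U := hU
  clear hU
  revert hx
  induction hU' with
  | basic V hV =>
    obtain ⟨f, hf, rfl⟩ := hV
    intro hx
    choose I hI using fun n => exists_finset_cyl (hf n) (mem_iInter.1 hx n)
    refine ⟨⋃ n, ↑(I n), countable_iUnion (fun n => (I n).countable_toSet), ?_⟩
    refine subset_iInter fun n => (fun y hy => hI n (fun i hi => hy i ?_))
    exact mem_iUnion.2 ⟨n, hi⟩
  | univ => exact fun _ => ⟨∅, countable_empty, subset_univ _⟩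
  | inter V W _ _ ihV ihW =>
    intro hx
    obtain ⟨s, hs, hsub⟩ := ihV hx.1
    obtain ⟨t, ht, htub⟩ := ihW hx.2
    refine ⟨s ∪ t, hs.union ht, subset_inter ?_ ?_⟩
    · exact fun y hy => hsub (fun i hi => hy i (Or.inl hi))
    · exact fun y hy => htub (fun i hi => hy i (Or.inr hi))
  | sUnion S _ ih =>
    intro hx
    obtain ⟨V, hV, hxV⟩ := hx
    obtain ⟨s, hs, hsub⟩ := ih V hV hxV
    exact ⟨s, hs, hsub.trans (subset_sUnion_of_mem hV)⟩

lemma exists_code (s : Set ι) (hs : s.Countable) :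
    ∃ f : ℕ → Option ι, s = {i | ∃ n, f n = some i} := by
  rcases s.eq_empty_or_nonempty with rfl | hne
  · exact ⟨fun _ => none, by simp⟩
  · obtain ⟨g, rfl⟩ := hs.exists_eq_range hne
    refine ⟨fun n => some (g n), ?_⟩
    ext i
    simp [eq_comm]

lemma lt_aleph_omega {c : Cardinal} (h : c < aleph omega0) : ∃ n : ℕ, c < aleph n := by
  rcases lt_or_ge c aleph0 with hc | hc
  · exact ⟨0, by simpa [aleph_zero] using hc⟩
  · obtain ⟨o, rfl⟩ := mem_range_aleph_iff.2 hc
    have ho : o < omega0 := aleph_lt_aleph.1 h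
    obtain ⟨n, rfl⟩ := lt_omega0.1 ho
    exact ⟨n + 1, aleph_lt_aleph.2 (by exact_mod_cast Nat.lt_succ_self n)⟩

/-- Key lower bound: a cofinal family of countable subsets of a set of size `ℵ_ω` has
size greater than `ℵ_ω`. -/
lemma cofinal_not_small {F : Set {s : Set ι // s.Countable}}
    (hι : #ι = aleph omega0)
    (hcof : ∀ s : Set ι, s.Countable → ∃ A ∈ F, s ⊆ A.1) :
    ¬ (#F ≤ aleph omega0) := by
  intro h
  classical
  haveI : IsWellOrder ((aleph omega0).ord.ToType) (· < ·) := isWellOrder_lt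
  have hmkO : #((aleph omega0).ord.ToType) = aleph omega0 := mk_ord_toType _
  obtain ⟨φ⟩ : Nonempty (↥F ↪ (aleph omega0).ord.ToType) := by
    rw [← le_def, hmkO]; exact h
  set G : ℕ → Set ↥F := fun n =>
    {A | typein (α := (aleph omega0).ord.ToType) (· < ·) (φ A) < (aleph n).ord} with hG
  have hGcard : ∀ n, #(G n) ≤ aleph n := by
    intro n
    have : ∀ A : G n,
        typein (α := (aleph omega0).ord.ToType) (· < ·) (φ A.1) ∈ Iio ((aleph n).ord) :=
      fun A => A.2
    let e : G n → ((aleph n).ord).ToType := fun A => ToType.mk ⟨_, this A⟩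
    have he : Function.Injective e := by
      intro a b hab
      have := ((ToType.mk (o := (aleph n).ord))).injective hab
      have := typein_injective (α := (aleph omega0).ord.ToType) (· < ·) (Subtype.mk_eq_mk.1 this)
      exact Subtype.ext (φ.injective this)
    calc #(G n) ≤ #((aleph n).ord).ToType := mk_le_of_injective he
      _ = aleph n := by rw [mk_toType, card_ord]
  have hGunion : ∀ A : ↥F, ∃ n, A ∈ G n := by
    intro A
    have h1 : typein (α := (aleph omega0).ord.ToType) (· < ·) (φ A) < (aleph omega0).ord := by
      have := typein_lt_type (α := (aleph omega0).ord.ToType) (· < ·) (φ A)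
      rwa [type_toType] at this
    obtain ⟨n, hn⟩ := lt_aleph_omega (lt_ord.1 h1)
    exact ⟨n, lt_ord.2 hn⟩
  set W : ℕ → Set ι := fun n => ⋃ (A : ↥F) (_ : A ∈ G n), (A.1.1 : Set ι) with hW
  have hWcard : ∀ n, #(W n) < aleph omega0 := by
    intro n
    have hle : #(W n) ≤ #(↥(G n) × ℕ) := by
      have : ∀ i : W n, ∃ (A : ↥(G n)) (k : ℕ),
          Classical.choose (exists_code A.1.1.1 A.1.1.2) k = some i.1 := by
        rintro ⟨i, hi⟩
        simp only [hW, mem_iUnion] at hi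
        obtain ⟨A, hA, hiA⟩ := hi
        have hc := Classical.choose_spec (exists_code A.1.1 A.1.2)
        rw [hc] at hiA
        obtain ⟨k, hk⟩ := hiA
        exact ⟨⟨A, hA⟩, k, hk⟩
      choose f k hfk using this
      refine mk_le_of_injective (f := fun i => (f i, k i)) ?_
      intro a b hab
      have hab1 : f a = f b := congrArg Prod.fst hab
      have hab2 : k a = k b := congrArg Prod.snd hab
      have h1 := hfk a
      rw [hab1, hab2] at h1
      have := h1.symm.trans (hfk b)
      exact Subtype.ext (Option.some_injective _ this)
    have hprod : #(↥(G n) × ℕ) ≤ aleph n * aleph0 := by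
      rw [mk_prod, Cardinal.lift_id, Cardinal.lift_id, mk_nat]
      exact mul_le_mul_left (hGcard n) _
    have hlt : aleph n * aleph0 < aleph omega0 := by
      apply mul_lt_of_lt (aleph0_le_aleph _)
      · exact aleph_lt_aleph.2 (by exact_mod_cast Ordinal.nat_lt_omega0 n)
      · rw [← aleph_zero]
        exact aleph_lt_aleph.2 omega0_pos
    exact (hle.trans hprod).trans_lt hlt
  have hpick : ∀ n, ∃ i : ι, i ∉ W n := by
    intro n
    by_contra hcon
    push_neg at hcon
    have hW' : W n = Set.univ := Set.eq_univ_of_forall hcon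
    have h2 := hWcard n
    rw [hW', mk_univ, hι] at h2
    exact lt_irrefl _ h2
  choose pick hpick using hpick
  obtain ⟨A, hAF, hsub⟩ := hcof (range pick) (countable_range pick)
  obtain ⟨n, hn⟩ := hGunion ⟨A, hAF⟩
  refine hpick n ?_
  have hmemA : pick n ∈ A.1 := hsub (mem_range_self n)
  simp only [hW, mem_iUnion]
  exact ⟨⟨A, hAF⟩, hn, hmemA⟩

end Aux

open FirstOrder Cardinal

/-- A language with countably many unary function symbols. -/
def myLang : FirstOrder.Language.{0, 0} where
  Functions := fun n => match n with | 1 => ℕ | _ => Empty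
  Relations := fun _ => Empty

instance myLangCount (n : ℕ) : Countable (myLang.Functions n) := by
  match n with
  | 0 => exact inferInstanceAs (Countable Empty)
  | 1 => exact inferInstanceAs (Countable ℕ)
  | (k+2) => exact inferInstanceAs (Countable Empty)

instance (n : ℕ) : Countable (myLang.Relations n) :=
  inferInstanceAs (Countable Empty)

instance : Countable myLang.Symbols := by
  unfold FirstOrder.Language.Symbols
  infer_instance

lemma myLang_card : myLang.card ≤ Cardinal.aleph0 := mk_le_aleph0

/-- Interpret the function symbols by a family of unary operations. -/
def myStructure (M : Type) (op : ℕ → M → M) : myLang.Structure M where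
  funMap {n} f v :=
    match n, f, v with
    | 1, f, v => op f (v 0)
    | 0, f, _ => Empty.elim f
    | (_+2), f, _ => Empty.elim f
  RelMap {n} r _ := Empty.elim r

lemma myFunMap (M : Type) (op : ℕ → M → M) (k : ℕ) (m : M) :
    @FirstOrder.Language.Structure.funMap myLang M (myStructure M op) 1
      (show myLang.Functions 1 from k) ![m] = op k m := rfl

open Set Cardinal Ordinal

/-- Assume `(ℵ_ω)^ω = ℵ_{ω+1}` and Chang's conjecture `(ℵ_{ω+1}, ℵ_ω) ↠ (ℵ_1, ℵ_0)`.
Then no point `x` of `2^{ℵ_ω}` has a local base `ℬ` in the `G_δ`-modification with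
`|{B' ∈ ℬ : B ⊆ B'}| ≤ ℵ_0` for every `B ∈ ℬ`; i.e. `χNt(x, (2^{ℵ_ω})_δ) ≥ ω_2`. -/
theorem stmt7
    (hpow : Cardinal.aleph Ordinal.omega0 ^ Cardinal.aleph0 =
      Cardinal.aleph (Ordinal.omega0 + 1))
    (hcc : ChangsConjecture)
    (ι : Type) (hι : Cardinal.mk ι = Cardinal.aleph Ordinal.omega0) (x : ι → Bool) :
    ¬ ∃ B : Set (Set (ι → Bool)),
        IsLocalBaseAt (deltaTop (ι → Bool)) x B ∧
        ∀ b ∈ B, {b' ∈ B | b ⊆ b'}.Countable := by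
  classical
  have hpow0 : (Cardinal.aleph.{0} Ordinal.omega0) ^ (Cardinal.aleph0 : Cardinal.{0}) =
      Cardinal.aleph.{0} (Ordinal.omega0 + 1) := by
    apply Cardinal.lift_injective
    rw [lift_power, lift_aleph, lift_aleph0, Ordinal.lift_omega0, lift_aleph,
      Ordinal.lift_add, Ordinal.lift_omega0, Ordinal.lift_one]
    exact hpow
  clear hpow
  rintro ⟨B, ⟨hBo, hBb⟩, hcount⟩
  -- choose countable supports for base elements
  have hsupp : ∀ b : ↥B, ∃ s : Set ι, s.Countable ∧ cyl x s ⊆ b.1 :=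
    fun b => deltaTop_exists_cyl (hBo b.1 b.2).1 (hBo b.1 b.2).2
  choose supp hsc hscyl using hsupp
  -- the family of supports
  let F : Set {s : Set ι // s.Countable} :=
    Set.range (fun b : ↥B => (⟨supp b, hsc b⟩ : {s : Set ι // s.Countable}))
  have hcof : ∀ s : Set ι, s.Countable → ∃ A ∈ F, s ⊆ A.1 := by
    intro s hs
    obtain ⟨b, hb, hbsub⟩ := hBb (cyl x s) (deltaTop_isOpen_cyl x hs) (mem_cyl_self x s)
    refine ⟨⟨supp ⟨b, hb⟩, hsc _⟩, ⟨⟨b, hb⟩, rfl⟩, ?_⟩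
    exact subset_of_cyl_subset x ((hscyl ⟨b, hb⟩).trans hbsub)
  -- coding of countable sets
  choose code hcode using fun A : {s : Set ι // s.Countable} => exists_code A.1 A.2
  -- cardinality of F
  have hKle : #{s : Set ι // s.Countable} ≤ aleph (omega0 + 1) := by
    have hinj : Function.Injective code := by
      intro a b hab
      apply Subtype.ext
      rw [hcode a, hcode b, hab]
    calc #{s : Set ι // s.Countable} ≤ #(ℕ → Option ι) := mk_le_of_injective hinj
      _ = #(Option ι) ^ (aleph0 : Cardinal) := by rw [← power_def, mk_nat]
      _ = (aleph omega0) ^ (aleph0 : Cardinal) := by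
          rw [mk_option, hι, add_one_eq (aleph0_le_aleph _)]
      _ = aleph (omega0 + 1) := hpow0
  have hFle : #F ≤ aleph (omega0 + 1) := (mk_set_le F).trans hKle
  have hFge : aleph (omega0 + 1) ≤ #F := by
    have h1 : aleph (omega0 + 1) = Order.succ (aleph omega0) := by
      rw [Ordinal.add_one_eq_succ, aleph_succ]
    rw [h1, Order.succ_le_iff]
    exact lt_of_not_ge (cofinal_not_small hι hcof)
  have hF : #F = aleph (omega0 + 1) := le_antisymm hFle hFge
  -- the structure for Chang's conjecture
  let M := ↥F ⊕ ι
  let op : ℕ → M → M := fun k =>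
    Sum.elim (fun A : ↥F => (code A.1 k).elim (Sum.inl A) Sum.inr) Sum.inr
  letI inst : myLang.Structure M := myStructure M op
  have hM : #M = aleph (omega0 + 1) := by
    rw [show #M = #(↥F ⊕ ι) from rfl, mk_sum, Cardinal.lift_id, Cardinal.lift_id, hF, hι]
    exact Cardinal.add_eq_left (aleph0_le_aleph _) (aleph_le_aleph.2 le_self_add)
  let U : Set M := Set.range (Sum.inr : ι → M)
  have hU : #U = aleph omega0 := by
    rw [show #U = #(Set.range (Sum.inr : ι → M)) from rfl,
      Cardinal.mk_range_eq _ Sum.inr_injective, hι]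
  obtain ⟨S, hS1, hS2⟩ := hcc myLang M myLang_card hM U hU
  set SM : Set M := ((S : FirstOrder.Language.Substructure myLang M) : Set M) with hSMdef
  let C : Set ι := {i | Sum.inr i ∈ SM}
  have hCc : C.Countable := by
    rw [← le_aleph0_iff_set_countable]
    have hinj : #C ≤ #(SM ∩ U : Set M) := by
      refine mk_le_of_injective (f := fun i => ⟨Sum.inr i.1, i.2, ⟨i.1, rfl⟩⟩) ?_
      intro a b hab
      exact Subtype.ext (Sum.inr_injective (congrArg Subtype.val hab))
    rw [hS2] at hinj
    exact hinj
  -- closure of S under the coding functions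
  have hclose : ∀ A : ↥F, Sum.inl A ∈ SM → ∀ i ∈ A.1.1, i ∈ C := by
    intro A hA i hi
    rw [hcode A.1] at hi
    obtain ⟨k, hk⟩ := hi
    have h2 : (FirstOrder.Language.Structure.funMap
        (show myLang.Functions 1 from k) ![Sum.inl A] : M) ∈ SM := by
      exact (S : FirstOrder.Language.Substructure myLang M).fun_mem
        (show myLang.Functions 1 from k) ![Sum.inl A] (by intro j; fin_cases j; exact hA)
    rw [myFunMap M op k (Sum.inl A)] at h2
    have h3 : op k (Sum.inl A) = Sum.inr i := by
      show (code A.1 k).elim (Sum.inl A) Sum.inr = Sum.inr i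
      rw [hk]
      rfl
    rw [h3] at h2
    exact h2
  -- the F-part of S is uncountable
  let SF : Set ↥F := {A | Sum.inl A ∈ SM}
  have hSFunc : ¬ SF.Countable := by
    intro hSFc
    have hsub : SM ⊆ (Sum.inl '' {A : ↥F | A ∈ SF}) ∪ (Sum.inr '' C) := by
      rintro (A | i) hm
      · exact Or.inl ⟨A, hm, rfl⟩
      · exact Or.inr ⟨i, hm, rfl⟩
    have hcard : #SM ≤ aleph0 := by
      calc #SM ≤ #((Sum.inl '' {A : ↥F | A ∈ SF}) ∪ (Sum.inr '' C) : Set M) :=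
            mk_le_mk_of_subset hsub
        _ ≤ #(Sum.inl '' {A : ↥F | A ∈ SF} : Set M) + #(Sum.inr '' C : Set M) := mk_union_le _ _
        _ ≤ aleph0 + aleph0 := by
            refine add_le_add ?_ ?_
            · exact (mk_image_le).trans (le_aleph0_iff_set_countable.2 hSFc)
            · exact (mk_image_le).trans (le_aleph0_iff_set_countable.2 hCc)
        _ = aleph0 := by simp
    have : #SM = aleph 1 := hS1
    rw [this] at hcard
    exact absurd hcard (by simpa using (aleph0_lt_aleph_one).not_le)
  -- section of the support map
  choose g hg using fun A : ↥F => A.2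
  -- final contradiction
  obtain ⟨b0, hb0, hb0sub⟩ := hBb (cyl x C) (deltaTop_isOpen_cyl x hCc) (mem_cyl_self x C)
  have hTc : {b' ∈ B | b0 ⊆ b'}.Countable := hcount b0 hb0
  apply hSFunc
  have hmemT : ∀ A : ↥SF, (g A.1).1 ∈ {b' ∈ B | b0 ⊆ b'} := by
    intro A
    refine ⟨(g A.1).2, ?_⟩
    have h1 : A.1.1.1 ⊆ C := fun i hi => hclose A.1 A.2 i hi
    have h2 : cyl x C ⊆ cyl x A.1.1.1 := cyl_mono x h1
    have h4 : supp (g A.1) = A.1.1.1 := congrArg Subtype.val (hg A.1)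
    have h3 : cyl x A.1.1.1 ⊆ (g A.1).1 := by
      rw [← h4]; exact hscyl (g A.1)
    exact hb0sub.trans (h2.trans h3)
  haveI := hTc.to_subtype
  have hθ : Function.Injective (fun A : ↥SF => (⟨(g A.1).1, hmemT A⟩ : ↥{b' ∈ B | b0 ⊆ b'})) := by
    intro A1 A2 hA
    have hval : (g A1.1).1 = (g A2.1).1 := Subtype.mk_eq_mk.1 hA
    have hgg : g A1.1 = g A2.1 := Subtype.ext hval
    have hKK : A1.1.1 = A2.1.1 := by rw [← hg A1.1, ← hg A2.1, hgg]
    exact Subtype.ext (Subtype.ext hKK)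
  haveI : Countable ↥SF := Function.Injective.countable hθ
  exact countable_coe_iff.1 this
end

section
/- Assume (ℵ_ω)^ω = ℵ_{ω+1} and (ℵ_{ω+1}, ℵ_ω) ↠ (ℵ_1, ℵ_0). Then the Noetherian type of the G_δ-modification of 2^{ℵ_ω} satisfies Nt((2^{ℵ_ω})_δ) ≥ ω_2. -/
/-- `B` is a base for the topology `t`. -/
def IsBaseFor {X : Type*} (t : TopologicalSpace X) (B : Set (Set X)) : Prop :=
  (∀ b ∈ B, t.IsOpen b) ∧ ∀ U, t.IsOpen U → ∀ x ∈ U, ∃ b ∈ B, x ∈ b ∧ b ⊆ U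

section AuxTop


open Set TopologicalSpace

namespace Stmt8Aux

variable {ι : Type}

/-- the generating family of `deltaTop` -/
def gen (X : Type) [TopologicalSpace X] : Set (Set X) :=
  {s | ∃ f : ℕ → Set X, (∀ n, IsOpen (f n)) ∧ s = ⋂ n, f n}

def x0 : ι → Bool := fun _ => false

def cyl (A : Set ι) : Set (ι → Bool) := {y | ∀ i ∈ A, y i = false}

lemma x0_mem_cyl (A : Set ι) : x0 ∈ cyl A := fun _ _ => rfl

lemma cyl_anti {A A' : Set ι} (h : A ⊆ A') : cyl A' ⊆ cyl A :=
  fun _ hy i hi => hy i (h hi)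

lemma subset_of_cyl_subset_cyl {D A : Set ι} (h : cyl D ⊆ cyl A) : A ⊆ D := by
  classical
  intro i hiA
  by_contra hiD
  have hy : (fun j => if j = i then true else false) ∈ cyl D := by
    intro j hj
    have : j ≠ i := fun e => hiD (e ▸ hj)
    simp [this]
  have := h hy i hiA
  simp at this

lemma cyl_mem_gen {A : Set ι} (hA : A.Countable) : cyl A ∈ gen (ι → Bool) := by
  rcases A.eq_empty_or_nonempty with h | h
  · exact ⟨fun _ => Set.univ, fun _ => isOpen_univ, by
      simp [cyl, h, Set.eq_univ_iff_forall]⟩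
  · obtain ⟨g, hg⟩ := hA.exists_eq_range h
    refine ⟨fun n => {y | y (g n) = false}, fun n => ?_, ?_⟩
    · show IsOpen ((fun y : ι → Bool => y (g n)) ⁻¹' {false})
      exact (continuous_apply (g n)).isOpen_preimage _ (isOpen_discrete _)
    · ext y
      simp only [cyl, hg, Set.mem_iInter, Set.mem_setOf_eq, Set.mem_range]
      constructor
      · intro h n; exact h (g n) ⟨n, rfl⟩
      · rintro h i ⟨n, rfl⟩; exact h n

lemma isOpen_cyl {A : Set ι} (hA : A.Countable) :
    (deltaTop (ι → Bool)).IsOpen (cyl A) :=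
  TopologicalSpace.GenerateOpen.basic _ (cyl_mem_gen hA)

lemma exists_cyl_subset {V : Set (ι → Bool)} (hV : (deltaTop (ι → Bool)).IsOpen V)
    (hx : x0 ∈ V) : ∃ A : Set ι, A.Countable ∧ cyl A ⊆ V := by
  have h : TopologicalSpace.GenerateOpen (gen (ι → Bool)) V := hV
  clear hV
  induction h with
  | basic s hs =>
    obtain ⟨f, hf, rfl⟩ := hs
    have hxn : ∀ n, x0 ∈ f n := by
      intro n; exact Set.mem_iInter.mp hx n
    have key : ∀ n : ℕ, ∃ I : Finset ι, ∀ y : ι → Bool,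
        (∀ i ∈ I, y i = false) → y ∈ f n := by
      intro n
      obtain ⟨I, u, hIu, hsub⟩ := (isOpen_pi_iff.mp (hf n)) x0 (hxn n)
      refine ⟨I, fun y hy => hsub ?_⟩
      intro a ha
      have : y a = x0 a := hy a ha
      rw [this]
      exact (hIu a ha).2
    choose I hI using key
    refine ⟨⋃ n, (I n : Set ι), countable_iUnion (fun n => (I n).countable_toSet), ?_⟩
    intro y hy
    refine Set.mem_iInter.mpr fun n => hI n y fun i hi => ?_
    exact hy i (Set.mem_iUnion.mpr ⟨n, hi⟩)
  | univ => exact ⟨∅, countable_empty, fun _ _ => trivial⟩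
  | inter s t _ _ ihs iht =>
    obtain ⟨A, hA, hAs⟩ := ihs hx.1
    obtain ⟨A', hA', hAt⟩ := iht hx.2
    exact ⟨A ∪ A', hA.union hA', fun y hy =>
      ⟨hAs (fun i hi => hy i (Or.inl hi)), hAt (fun i hi => hy i (Or.inr hi))⟩⟩
  | sUnion S _ ih =>
    obtain ⟨s, hsS, hxs⟩ := hx
    obtain ⟨A, hA, hAs⟩ := ih s hsS hxs
    exact ⟨A, hA, fun y hy => ⟨s, hsS, hAs hy⟩⟩

end Stmt8Aux

end AuxTop

section AuxCard

open Set Cardinal Ordinal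

namespace Stmt8Aux

lemma mul_aleph0_eq (o : Ordinal.{0}) : Cardinal.aleph.{0} o * ℵ₀ = Cardinal.aleph.{0} o := by
  rw [Cardinal.mul_eq_max (Cardinal.aleph0_le_aleph o) le_rfl]
  exact max_eq_left (Cardinal.aleph0_le_aleph o)

lemma aleph0_mul_eq (o : Ordinal.{0}) : ℵ₀ * Cardinal.aleph.{0} o = Cardinal.aleph.{0} o := by
  rw [Cardinal.mul_eq_max le_rfl (Cardinal.aleph0_le_aleph o)]
  exact max_eq_right (Cardinal.aleph0_le_aleph o)

lemma aleph_omega_eq_iSup : Cardinal.aleph.{0} Ordinal.omega0 = ⨆ n : ℕ, Cardinal.aleph.{0} (n : Ordinal) := by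
  haveI : Nonempty (Set.Iio Ordinal.omega0) := ⟨⟨0, Ordinal.omega0_pos⟩⟩
  rw [Cardinal.aleph_limit Ordinal.isSuccLimit_omega0]
  apply le_antisymm
  · refine ciSup_le fun a => ?_
    obtain ⟨n, hn⟩ := Ordinal.lt_omega0.mp a.2
    calc ℵ_ (a : Ordinal) = ℵ_ (n : Ordinal) := by rw [hn]
    _ ≤ ⨆ n : ℕ, ℵ_ (n : Ordinal) := le_ciSup (Cardinal.bddAbove_range _) n
  · refine ciSup_le fun n => ?_
    exact le_ciSup (Cardinal.bddAbove_range _)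
      (⟨(n : Ordinal), Ordinal.nat_lt_omega0 n⟩ : Set.Iio Ordinal.omega0)

lemma mk_sigma_aleph :
    #(Σ n : ℕ, ((Cardinal.aleph.{0} (n : Ordinal)).ord.ToType)) = Cardinal.aleph.{0} Ordinal.omega0 := by
  have h1 : #(Σ n : ℕ, ((ℵ_ (n : Ordinal)).ord.ToType))
      = Cardinal.sum (fun n : ℕ => ℵ_ (n : Ordinal)) := by
    rw [Cardinal.mk_sigma]
    congr 1
    funext n
    rw [Cardinal.mk_toType, Cardinal.card_ord]
  rw [h1]
  apply le_antisymm
  · have h2 : Cardinal.sum (fun n : ℕ => ℵ_ (n : Ordinal)) ≤ #ℕ * ⨆ n : ℕ, ℵ_ (n : Ordinal) :=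
      Cardinal.sum_le_mk_mul_iSup _
    rw [Cardinal.mk_nat, ← aleph_omega_eq_iSup] at h2
    rw [aleph0_mul_eq] at h2
    exact h2
  · rw [aleph_omega_eq_iSup]
    exact ciSup_le fun n => Cardinal.le_sum _ n

/-- Diagonalization: a ⊆-cofinal family of countable subsets of a set of size `ℵ_ω`
cannot have size `≤ ℵ_ω`. -/
lemma cofinal_family_large {ι : Type} (hι : #ι = ℵ_ Ordinal.omega0)
    (𝒟 : Set (Set ι)) (hDc : ∀ D ∈ 𝒟, D.Countable)
    (hcof : ∀ A : Set ι, A.Countable → ∃ D ∈ 𝒟, A ⊆ D) :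
    ¬ #𝒟 ≤ ℵ_ Ordinal.omega0 := by
  intro hle
  have hle2 : #𝒟 ≤ #(Σ n : ℕ, ((ℵ_ (n : Ordinal)).ord.ToType)) := by
    rw [mk_sigma_aleph]; exact hle
  obtain ⟨k⟩ := Cardinal.le_def _ _ |>.mp hle2
  set T := Σ n : ℕ, ((ℵ_ (n : Ordinal)).ord.ToType) with hT
  set E : ℕ → Set ↥𝒟 := fun n => {D : ↥𝒟 | (k D).1 = n} with hE
  have hfiber : ∀ n : ℕ, #{t : T // t.1 = n} = ℵ_ (n : Ordinal) := by
    intro n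
    have hb : Function.Bijective (fun x : (ℵ_ (n : Ordinal)).ord.ToType =>
        (⟨⟨n, x⟩, rfl⟩ : {t : T // t.1 = n})) := by
      constructor
      · intro x y h
        have h1 := congrArg Subtype.val h
        simp only at h1
        exact eq_of_heq (Sigma.ext_iff.mp h1).2
      · rintro ⟨⟨m, x⟩, h⟩
        dsimp at h
        subst h
        exact ⟨x, rfl⟩
    rw [← Cardinal.mk_congr (Equiv.ofBijective _ hb), Cardinal.mk_toType, Cardinal.card_ord]
  have hEcard : ∀ n, #(E n) ≤ ℵ_ (n : Ordinal) := by
    intro n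
    rw [← hfiber n]
    refine Cardinal.mk_le_of_injective
      (f := fun D : E n => (⟨k (D : ↥𝒟), D.2⟩ : {t : T // t.1 = n})) ?_
    intro D D' h
    exact Subtype.ext (k.injective (congrArg Subtype.val h))
  have key : ∀ n : ℕ, ∃ a : ι, a ∉ ⋃ (D : E n), ((D : ↥𝒟) : Set ι) := by
    intro n
    by_contra hcon
    push_neg at hcon
    have huniv : (⋃ (D : E n), ((D : ↥𝒟) : Set ι)) = Set.univ :=
      Set.eq_univ_iff_forall.mpr hcon
    have hbound : #(⋃ (D : E n), ((D : ↥𝒟) : Set ι)) ≤ ℵ_ (n : Ordinal) := by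
      have h1 : #(⋃ (D : E n), ((D : ↥𝒟) : Set ι))
          ≤ #(E n) * ⨆ (D : E n), #(((D : ↥𝒟) : Set ι)) := Cardinal.mk_iUnion_le _
      have h2 : (⨆ (D : E n), #(((D : ↥𝒟) : Set ι))) ≤ ℵ₀ := by
        rcases isEmpty_or_nonempty (E n) with he | he
        · simp [ciSup_of_empty]
        · refine ciSup_le fun D => ?_
          haveI : Countable (((D : ↥𝒟) : Set ι)) :=
            Set.countable_coe_iff.mpr (hDc _ ((D : ↥𝒟)).2)
          exact Cardinal.mk_le_aleph0
      calc #(⋃ (D : E n), ((D : ↥𝒟) : Set ι))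
          ≤ #(E n) * ⨆ (D : E n), #(((D : ↥𝒟) : Set ι)) := h1
      _ ≤ ℵ_ (n : Ordinal) * ℵ₀ := mul_le_mul' (hEcard n) h2
      _ = ℵ_ (n : Ordinal) := mul_aleph0_eq _
    rw [huniv, Cardinal.mk_univ, hι] at hbound
    exact (Cardinal.aleph_lt_aleph.mpr (Ordinal.nat_lt_omega0 n)).not_ge hbound
  choose a ha using key
  obtain ⟨D, hD, hsub⟩ := hcof (Set.range a) (Set.countable_range a)
  set n := (k ⟨D, hD⟩).1 with hn
  have hmem : (⟨D, hD⟩ : ↥𝒟) ∈ E n := rfl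
  have : a n ∈ ⋃ (D' : E n), ((D' : ↥𝒟) : Set ι) :=
    Set.mem_iUnion.mpr ⟨⟨⟨D, hD⟩, hmem⟩, hsub ⟨n, rfl⟩⟩
  exact ha n this

/-- Upper bound: a family of countable subsets of `ι` has size at most `#(ℕ → ι) + 1`. -/
lemma family_countable_le {ι : Type} (𝒟 : Set (Set ι)) (hDc : ∀ D ∈ 𝒟, D.Countable) :
    #𝒟 ≤ #(ℕ → ι) + 1 := by
  have hchoice : ∀ D : ↥𝒟, ∃ g : (ℕ → ι) ⊕ PUnit,
      (D : Set ι) = Sum.elim Set.range (fun _ => (∅ : Set ι)) g := by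
    rintro ⟨D, hD⟩
    rcases D.eq_empty_or_nonempty with h | h
    · exact ⟨Sum.inr PUnit.unit, by simp [h]⟩
    · obtain ⟨g, hg⟩ := (hDc D hD).exists_eq_range h
      exact ⟨Sum.inl g, hg⟩
  choose g hg using hchoice
  have hinj : Function.Injective g := by
    intro D D' h
    apply Subtype.ext
    rw [show (D : Set ι) = _ from hg D, show (D' : Set ι) = _ from hg D', h]
  calc #𝒟 ≤ #((ℕ → ι) ⊕ PUnit) := Cardinal.mk_le_of_injective hinj
  _ = #(ℕ → ι) + 1 := by simp [Cardinal.mk_sum]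

end Stmt8Aux

end AuxCard

section AuxLang

open FirstOrder Cardinal

namespace Stmt8Aux

/-- A language with one constant symbol, one unary and one binary function symbol. -/
def L3 : FirstOrder.Language.{0, 0} :=
  ⟨fun n => match n with | 0 => PUnit | 1 => PUnit | 2 => PUnit | _ => Empty,
   fun _ => Empty⟩

lemma L3_card_le : L3.card ≤ Cardinal.aleph0 := by
  haveI h1 : ∀ n, Countable (L3.Functions n) := by
    intro n
    match n with
    | 0 => exact inferInstanceAs (Countable PUnit)
    | 1 => exact inferInstanceAs (Countable PUnit)
    | 2 => exact inferInstanceAs (Countable PUnit)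
    | (n+3) => exact inferInstanceAs (Countable Empty)
  haveI h2 : ∀ n, Countable (L3.Relations n) := fun _ => inferInstanceAs (Countable Empty)
  haveI : Countable L3.Symbols :=
    inferInstanceAs (Countable ((Σ l, L3.Functions l) ⊕ (Σ l, L3.Relations l)))
  exact Cardinal.mk_le_aleph0

/-- Interpret `L3` using a point, a unary map and a binary map. -/
def L3Structure {M : Type} (z : M) (s : M → M) (e : M → M → M) : L3.Structure M where
  funMap {n} f x :=
    match n, f, x with
    | 0, _, _ => z
    | 1, _, x => s (x 0)
    | 2, _, x => e (x 0) (x 1)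
    | (_+3), f, _ => nomatch f
  RelMap {n} r _ := nomatch r

end Stmt8Aux

end AuxLang

open Cardinal FirstOrder Stmt8Aux

/-- Assume `(ℵ_ω)^ω = ℵ_{ω+1}` and Chang's conjecture `(ℵ_{ω+1}, ℵ_ω) ↠ (ℵ_1, ℵ_0)`.
Then `Nt((2^{ℵ_ω})_δ) ≥ ω_2`: the `G_δ`-modification of `2^{ℵ_ω}` has no base `ℬ` with
`|{B' ∈ ℬ : B ⊆ B'}| ≤ ℵ_0` for every `B ∈ ℬ`. -/
theorem stmt8
    (hpow : Cardinal.aleph Ordinal.omega0 ^ Cardinal.aleph0 =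
      Cardinal.aleph (Ordinal.omega0 + 1))
    (hcc : ChangsConjecture)
    (ι : Type) (hι : Cardinal.mk ι = Cardinal.aleph Ordinal.omega0) :
    ¬ ∃ B : Set (Set (ι → Bool)),
        IsBaseFor (deltaTop (ι → Bool)) B ∧
        ∀ b ∈ B, {b' ∈ B | b ⊆ b'}.Countable := by
  classical
  have hpow0 : Cardinal.aleph.{0} Ordinal.omega0 ^ Cardinal.aleph0 =
      Cardinal.aleph.{0} (Ordinal.omega0 + 1) := by
    apply Cardinal.lift_injective
    rw [Cardinal.lift_power, Cardinal.lift_aleph0, Cardinal.lift_aleph, Cardinal.lift_aleph,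
      Ordinal.lift_add, Ordinal.lift_omega0, Ordinal.lift_one]
    exact hpow
  clear hpow
  rintro ⟨B, ⟨hOpen, hB⟩, hCnt⟩
  haveI hinf : Infinite ι :=
    Cardinal.infinite_iff.mpr (by rw [hι]; exact Cardinal.aleph0_le_aleph _)
  -- a countable support for every element of `B` containing `x0`
  have hDf : ∀ b : Set (ι → Bool), ∃ A : Set ι,
      (b ∈ B ∧ x0 ∈ b) → (A.Countable ∧ cyl A ⊆ b) := by
    intro b
    by_cases h : b ∈ B ∧ x0 ∈ b
    · obtain ⟨A, hA⟩ := exists_cyl_subset (hOpen b h.1) h.2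
      exact ⟨A, fun _ => hA⟩
    · exact ⟨∅, fun hh => absurd hh h⟩
  choose Df hDf using hDf
  -- the family of supports
  set 𝒟 : Set (Set ι) := {D | ∃ b ∈ B, x0 ∈ b ∧ Df b = D} with h𝒟
  have hDc : ∀ D ∈ 𝒟, D.Countable := by
    rintro D ⟨b, hb, hx, rfl⟩
    exact (hDf b ⟨hb, hx⟩).1
  have hcof : ∀ A : Set ι, A.Countable → ∃ D ∈ 𝒟, A ⊆ D := by
    intro A hA
    obtain ⟨b, hbB, hxb, hbsub⟩ := hB (cyl A) (isOpen_cyl hA) x0 (x0_mem_cyl A)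
    refine ⟨Df b, ⟨b, hbB, hxb, rfl⟩, ?_⟩
    exact subset_of_cyl_subset_cyl (((hDf b ⟨hbB, hxb⟩).2).trans hbsub)
  -- cardinality of the family
  have hlower : ¬ #𝒟 ≤ Cardinal.aleph Ordinal.omega0 :=
    cofinal_family_large hι 𝒟 hDc hcof
  have hupper : #𝒟 ≤ Cardinal.aleph (Ordinal.omega0 + 1) := by
    have h1 := family_countable_le 𝒟 hDc
    have harrow : #(ℕ → ι) = Cardinal.aleph Ordinal.omega0 ^ Cardinal.aleph0 := by
      rw [Cardinal.mk_arrow, Cardinal.lift_id, Cardinal.lift_id, hι, Cardinal.mk_nat]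
    rw [harrow, hpow0] at h1
    refine h1.trans (le_of_eq ?_)
    exact Cardinal.add_eq_left (Cardinal.aleph0_le_aleph _)
      (le_trans Cardinal.one_le_aleph0 (Cardinal.aleph0_le_aleph _))
  have h𝒟card : #𝒟 = Cardinal.aleph (Ordinal.omega0 + 1) := by
    apply le_antisymm hupper
    rw [Ordinal.add_one_eq_succ, Cardinal.aleph_succ]
    exact Order.succ_le_iff.mpr (not_le.mp hlower)
  -- enumerations of the members of the family
  have hf : ∀ D : ↥𝒟, ∃ g : ℕ → ι, (D : Set ι) ⊆ Set.range g := by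
    rintro ⟨D, hD⟩
    rcases D.eq_empty_or_nonempty with h | h
    · exact ⟨fun _ => Classical.arbitrary ι, by simp [h]⟩
    · obtain ⟨g, hg⟩ := (hDc D hD).exists_eq_range h
      exact ⟨g, hg ▸ subset_rfl⟩
  choose fD hfD using hf
  -- the structure
  set M := ι ⊕ ↥𝒟 with hM
  let nemb : ℕ ↪ ι := Infinite.natEmbedding ι
  let basePt : ℕ → M := fun n => Sum.inl (nemb n)
  have hbaseinj : Function.Injective basePt := fun a b h =>
    nemb.injective (Sum.inl_injective h)
  let zz : M := basePt 0
  let ss : M → M := Function.extend basePt (fun n => basePt (n + 1)) id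
  let ee : M → M → M := fun x y =>
    match x with
    | Sum.inr j => Function.extend basePt (fun n => Sum.inl (fD j n)) (fun _ => x) y
    | Sum.inl _ => x
  letI inst : L3.Structure M := L3Structure zz ss ee
  have hmkM : #M = Cardinal.aleph (Ordinal.omega0 + 1) := by
    rw [hM, Cardinal.mk_sum, Cardinal.lift_id, Cardinal.lift_id, hι, h𝒟card]
    exact Cardinal.add_eq_right (Cardinal.aleph0_le_aleph _)
      (Cardinal.aleph_le_aleph.mpr (le_self_add))
  set U : Set M := Set.range (Sum.inl : ι → M) with hU
  have hmkU : #U = Cardinal.aleph Ordinal.omega0 := by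
    rw [Cardinal.mk_range_eq _ Sum.inl_injective, hι]
  obtain ⟨S, hScard, hSU⟩ := hcc L3 M L3_card_le hmkM U hmkU
  set s : Set M := ((S : Language.Substructure L3 M) : Set M) with hs
  have hz : zz ∈ s :=
    (S : Language.Substructure L3 M).fun_mem (n := 0) PUnit.unit ![] (fun i => i.elim0)
  have hss : ∀ x ∈ s, ss x ∈ s := fun x hx =>
    (S : Language.Substructure L3 M).fun_mem (n := 1) PUnit.unit ![x]
      (fun i => by fin_cases i <;> exact hx)
  have hee : ∀ x ∈ s, ∀ y ∈ s, ee x y ∈ s := fun x hx y hy =>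
    (S : Language.Substructure L3 M).fun_mem (n := 2) PUnit.unit ![x, y]
      (fun i => by fin_cases i <;> assumption)
  have hbase : ∀ n, basePt n ∈ s := by
    intro n
    induction n with
    | zero => exact hz
    | succ n ih =>
      have h1 := hss _ ih
      rwa [show ss (basePt n) = basePt (n + 1) from hbaseinj.extend_apply _ _ n] at h1
  -- the countable trace on ι
  set Astar : Set ι := {i | Sum.inl i ∈ s} with hAstar
  have hsUcnt : Countable ↥(s ∩ U) :=
    Cardinal.mk_le_aleph0_iff.mp (le_of_eq hSU)
  have hAstar_count : Astar.Countable := by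
    rw [← Set.countable_coe_iff]
    refine Function.Injective.countable
      (f := fun i : ↥Astar => (⟨Sum.inl i, i.2, ⟨i, rfl⟩⟩ : ↥(s ∩ U))) ?_
    intro i i' h
    exact Subtype.ext (Sum.inl_injective (congrArg Subtype.val h))
  -- members of the family inside `S` are contained in `Astar`
  have hDsub : ∀ j : ↥𝒟, Sum.inr j ∈ s → (j : Set ι) ⊆ Astar := by
    intro j hj i hi
    obtain ⟨n, hn⟩ := hfD j hi
    have h1 : ee (Sum.inr j) (basePt n) = Sum.inl (fD j n) := by
      show Function.extend basePt _ _ (basePt n) = _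
      rw [hbaseinj.extend_apply]
    have h2 := hee _ hj _ (hbase n)
    rw [h1] at h2
    show Sum.inl i ∈ s
    rw [← hn]
    exact h2
  -- the small basic set
  obtain ⟨bstar, hbstarB, hxbstar, hbstarsub⟩ :=
    hB (cyl Astar) (isOpen_cyl hAstar_count) x0 (x0_mem_cyl _)
  -- a choice of an element of `B` for each member of the family
  have hgex : ∀ j : ↥𝒟, ∃ b, b ∈ B ∧ x0 ∈ b ∧ Df b = (j : Set ι) := fun j => j.2
  choose gb hgb using hgex
  have hginj : Function.Injective gb := by
    intro j j' h
    apply Subtype.ext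
    rw [← (hgb j).2.2, ← (hgb j').2.2, h]
  -- the uncountable part of `S`
  set W : Set M := s ∩ Uᶜ with hW
  have hWuncount : ¬ W.Countable := by
    intro hWc
    have h1 : (s ∩ U).Countable := Set.countable_coe_iff.mp hsUcnt
    have h2 : s.Countable := by
      have hsub : s ⊆ (s ∩ U) ∪ (s ∩ Uᶜ) := by
        intro x hx
        by_cases h : x ∈ U
        · exact Or.inl ⟨hx, h⟩
        · exact Or.inr ⟨hx, h⟩
      exact ((h1.union hWc).mono hsub)
    have h3 : #s ≤ Cardinal.aleph0 := by
      haveI := h2.to_subtype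
      exact Cardinal.mk_le_aleph0
    have h4 : #s = Cardinal.aleph 1 := hScard
    rw [h4] at h3
    exact (Cardinal.aleph0_lt_aleph_one).not_ge h3
  -- extract indices
  have hxj : ∀ x : ↥W, ∃ j : ↥𝒟, (x : M) = Sum.inr j := by
    rintro ⟨x, hxs, hxU⟩
    match x with
    | Sum.inl i => exact absurd ⟨i, rfl⟩ hxU
    | Sum.inr j => exact ⟨j, rfl⟩
  choose toJ htoJ using hxj
  -- the injection into the up-set of `bstar`
  have hup : ∀ x : ↥W, gb (toJ x) ∈ {b' ∈ B | bstar ⊆ b'} := by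
    intro x
    have hjS : Sum.inr (toJ x) ∈ s := by
      have := (x.2 : (x : M) ∈ s ∩ Uᶜ).1
      rwa [htoJ x] at this
    refine ⟨(hgb (toJ x)).1, ?_⟩
    have hc1 : cyl Astar ⊆ cyl ((toJ x : ↥𝒟) : Set ι) := cyl_anti (hDsub _ hjS)
    have hc2 : cyl ((toJ x : ↥𝒟) : Set ι) ⊆ gb (toJ x) := by
      have := (hDf (gb (toJ x)) ⟨(hgb (toJ x)).1, (hgb (toJ x)).2.1⟩).2
      rwa [(hgb (toJ x)).2.2] at this
    exact hbstarsub.trans (hc1.trans hc2)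
  have htoJinj : Function.Injective toJ := by
    intro x y h
    apply Subtype.ext
    rw [htoJ x, htoJ y, h]
  -- conclude
  apply hWuncount
  rw [← Set.countable_coe_iff]
  haveI : Countable ↥{b' ∈ B | bstar ⊆ b'} := (hCnt bstar hbstarB).to_subtype
  exact Function.Injective.countable
    (f := fun x : ↥W => (⟨gb (toJ x), hup x⟩ : ↥{b' ∈ B | bstar ⊆ b'}))
    (fun x y h => htoJinj (hginj (congrArg Subtype.val h)))
end
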